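/- Any finite set of pairwise orthogonal non-zero sharp effects in a system of an operational PET is linearly independent in the associated order unit space. -/
import Mathlib

/-- In a system of an operational PET (whose effect space is the
unit interval of a finite-dimensional order unit space `V`), any finite set of
pairwise orthogonal non-zero sharp effects is linearly independent.
Context facts: the assert map `asrt_p` of a sharp effect `p` acts linearly on
effects with `p ∘ asrt_p = p`, and `q ∘ asrt_p = 0` for sharp `q` orthogonal
to `p` (orthogonality of sharp effects meaning `p + q ≤ 1`). -/
theorem opet_orthogonal_sharp_linearIndependent
    {V : Type} [AddCommGroup V] [PartialOrder V] [Module ℝ V] [FiniteDimensional ℝ V]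
    (one : V) (Sharp : V → Prop)
    (asrt : V → (V →ₗ[ℝ] V))
    (hfix : ∀ p, Sharp p → asrt p p = p)
    (horth : ∀ p q, Sharp p → Sharp q → p + q ≤ one → asrt p q = 0)
    (n : ℕ) (p : Fin n → V)
    (hsharp : ∀ i, Sharp (p i)) (hnz : ∀ i, p i ≠ 0)
    (hpair : ∀ i j, i ≠ j → p i + p j ≤ one) :
    LinearIndependent ℝ p := by
  rw [Fintype.linearIndependent_iff]
  intro c hc j
  have h := congrArg (asrt (p j)) hc
  rw [map_sum, map_zero] at h
  have h2 : ∀ i, (asrt (p j)) (c i • p i) = if i = j then c j • p j else 0 := by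
    intro i
    rw [map_smul]
    by_cases hij : i = j
    · simp [hij, hfix _ (hsharp j)]
    · simp [hij, horth _ _ (hsharp j) (hsharp i) (hpair j i (Ne.symm hij))]
  rw [Finset.sum_congr rfl (fun i _ => h2 i), Finset.sum_ite_eq' ] at h
  simp at h
  rcases h with h | h
  · exact h
  · exact absurd h (hnz j)
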